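/- Let N ≥ 1 and d₁ ≤ d₂ ≤ … ≤ d_N ≤ d_{N+1} be positive integers. There exists a unit vector ψ in ℂ^{d₁} ⊗ … ⊗ ℂ^{d_N} ⊗ ℂ^{d_{N+1}} such that every one-body reduced density matrix of the pure state |ψ⟩⟨ψ| has non-degenerate (all distinct) eigenvalues, if and only if d_{N+1} ≤ (∏_{i=1}^N d_i) + 1. -/

import Mathlib

open scoped BigOperators

section Aux
open Polynomial Matrix

theorem charpoly_diag {n : Type*} [Fintype n] [DecidableEq n] (w : n → ℂ) :
    (Matrix.diagonal w).charpoly = ∏ i, (X - C (w i)) := by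
  rw [Matrix.charpoly, show charmatrix (Matrix.diagonal w) = Matrix.diagonal (fun i => (X : ℂ[X]) - C (w i)) from ?_, det_diagonal]
  ext i j
  by_cases h : i = j
  · subst h; simp [charmatrix_apply_eq]
  · simp [charmatrix_apply_ne _ _ _ h, diagonal_apply_ne _ h]

theorem charpoly_conj_unitary {n : Type*} [Fintype n] [DecidableEq n] (U B : Matrix n n ℂ)
    (hU : U ∈ Matrix.unitaryGroup n ℂ) :
    (U * B * star U).charpoly = B.charpoly := by
  have h1 : U * star U = 1 := Matrix.mem_unitaryGroup_iff.mp hU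
  have h1' : star U * U = 1 := Matrix.mem_unitaryGroup_iff'.mp hU
  set f := (RingHom.mapMatrix (C : ℂ →+* ℂ[X]) : Matrix n n ℂ →+* Matrix n n ℂ[X]) with hf
  have h2 : charmatrix (U * B * star U) = f U * charmatrix B * f (star U) := by
    unfold charmatrix
    rw [mul_sub, sub_mul]
    congr 1
    · rw [mul_assoc, (Matrix.scalar_commute (X : ℂ[X]) (fun r => Commute.all _ _) (f (star U)))]
      rw [← mul_assoc, ← map_mul f, h1, _root_.map_one f, one_mul]
    · rw [map_mul f, map_mul f]
  rw [Matrix.charpoly, h2, det_mul, det_mul, mul_comm, ← mul_assoc, ← det_mul,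
    ← map_mul f, h1', _root_.map_one f, det_one, one_mul, Matrix.charpoly]

theorem diag_eig_inj {n : Type*} [Fintype n] [DecidableEq n] (v : n → ℝ)
    (hv : Function.Injective v)
    (h : Matrix.IsHermitian (Matrix.diagonal (fun i => (v i : ℂ)))) :
    Function.Injective h.eigenvalues := by
  have hsp := h.spectral_theorem
  have hcp : (Matrix.diagonal (fun i => (v i : ℂ))).charpoly
      = (Matrix.diagonal (RCLike.ofReal ∘ h.eigenvalues : n → ℂ)).charpoly := by
    conv_lhs => rw [hsp]
    exact charpoly_conj_unitary _ _ (h.eigenvectorUnitary).2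
  rw [charpoly_diag, charpoly_diag] at hcp
  -- turn into multiset equality via roots
  have hroots : (Finset.univ.val.map (fun i => (v i : ℂ)))
      = (Finset.univ.val.map (fun i => ((h.eigenvalues i : ℝ) : ℂ))) := by
    have r1 := Polynomial.roots_multiset_prod_X_sub_C (Finset.univ.val.map (fun i => (v i : ℂ)))
    have r2 := Polynomial.roots_multiset_prod_X_sub_C
      (Finset.univ.val.map (fun i => ((h.eigenvalues i : ℝ) : ℂ)))
    rw [Multiset.map_map] at r1 r2
    have e1 : ((fun a => X - C a) ∘ fun i => (v i : ℂ)) = fun i => X - C ((v i : ℂ)) := rfl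
    have : (Multiset.map ((fun a => X - C a) ∘ fun i => (v i : ℂ)) Finset.univ.val).prod
        = (Multiset.map ((fun a => X - C a) ∘ fun i => ((h.eigenvalues i : ℝ) : ℂ)) Finset.univ.val).prod := by
      rw [← Finset.prod_eq_multiset_prod, ← Finset.prod_eq_multiset_prod]
      exact hcp
    rw [← r1, ← r2, this]
  have hnodup : (Finset.univ.val.map (fun i => ((h.eigenvalues i : ℝ) : ℂ))).Nodup := by
    rw [← hroots]
    exact Finset.univ.nodup.map (fun a b hab => hv (by exact_mod_cast hab))
  intro i j hij
  exact Multiset.inj_on_of_nodup_map hnodup i (Finset.mem_univ_val _)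
    j (Finset.mem_univ_val _) (by rw [hij])

theorem sum_range_two_pow_lt (M : ℕ) : ∑ i ∈ Finset.range M, 2 ^ i < 2 ^ M := by
  induction M with
  | zero => simp
  | succ n ih => rw [Finset.sum_range_succ]; have : 0 < 2 ^ n := pow_pos (by norm_num) n; omega

theorem disj_two_pow_sum_ne (S T : Finset ℕ) (hd : Disjoint S T) (hS : S.Nonempty)
    (hT : T.Nonempty) : (∑ i ∈ S, 2 ^ i) ≠ ∑ i ∈ T, 2 ^ i := by
  have key : ∀ S T : Finset ℕ, Disjoint S T → S.Nonempty → T.Nonempty →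
      ∀ hne : (S ∪ T).Nonempty, (S ∪ T).max' hne ∈ S →
      (∑ i ∈ T, 2 ^ i) < ∑ i ∈ S, 2 ^ i := by
    intro S T hd hS hT hne hM
    set M := (S ∪ T).max' hne with hMdef
    have hTsub : T ⊆ Finset.range M := by
      intro t ht
      rw [Finset.mem_range]
      have h1 : t ≤ M := Finset.le_max' _ _ (Finset.mem_union_right _ ht)
      have h2 : t ≠ M := by
        rintro rfl
        exact (Finset.disjoint_left.mp hd hM) ht
      omega
    calc (∑ i ∈ T, 2 ^ i) ≤ ∑ i ∈ Finset.range M, 2 ^ i :=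
          Finset.sum_le_sum_of_subset hTsub
      _ < 2 ^ M := sum_range_two_pow_lt M
      _ ≤ ∑ i ∈ S, 2 ^ i := Finset.single_le_sum (fun i _ => Nat.zero_le _) hM
  have hne : (S ∪ T).Nonempty := Finset.Nonempty.mono Finset.subset_union_left hS
  have hne' : (T ∪ S).Nonempty := Finset.Nonempty.mono Finset.subset_union_left hT
  rcases Finset.mem_union.mp ((S ∪ T).max'_mem hne) with hM | hM
  · exact (key S T hd hS hT hne hM).ne'
  · have : (T ∪ S).max' hne' ∈ T := by
      have : (T ∪ S).max' hne' = (S ∪ T).max' hne := by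
        congr 1
        exact Finset.union_comm T S
      rw [this]; exact hM
    exact (key T S hd.symm hT hS hne' this).ne

theorem exists_inj_cover (N : ℕ) (hN : 1 ≤ N) (d' : Fin N → ℕ) (hpos : ∀ i, 0 < d' i) (m : ℕ)
    (hmP : m ≤ ∏ i, d' i) (hcov : ∀ i, d' i - 1 ≤ m) :
    ∃ F : Fin m → (∀ i, Fin (d' i)), Function.Injective F ∧
      ∀ (i : Fin N) (a : Fin (d' i)), (∀ k : Fin m, F k i ≠ a) → (a : ℕ) = d' i - 1 := by
  classical
  have : Nonempty (Fin N) := ⟨⟨0, by omega⟩⟩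
  obtain ⟨i₀, -, hi₀⟩ := Finset.exists_max_image (Finset.univ : Finset (Fin N)) d'
    ⟨⟨0, by omega⟩, Finset.mem_univ _⟩
  have hdmax_le : ∀ i : Fin N, d' i ≤ d' i₀ := fun i => hi₀ i (Finset.mem_univ i)
  set K : ℕ := min m (d' i₀) with hKdef
  have hKm : K ≤ m := min_le_left _ _
  have hKd : K ≤ d' i₀ := min_le_right _ _
  have hKge : ∀ i : Fin N, d' i - 1 ≤ K := by
    intro i
    have h1 := hdmax_le i
    have h2 := hcov i
    omega
  let stair : ℕ → (∀ i, Fin (d' i)) :=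
    fun k i => ⟨min k (d' i - 1), by have := hpos i; omega⟩
  have stinj : ∀ k l : ℕ, k < K → l < K → stair k = stair l → k = l := by
    intro k l hk hl hkl
    have := congrFun hkl i₀
    simp only [stair, Fin.mk.injEq] at this
    omega
  set A : Finset (∀ i, Fin (d' i)) := (Finset.range K).image stair with hA
  have hcardA : A.card = K := by
    rw [hA, Finset.card_image_of_injOn, Finset.card_range]
    intro k hk l hl
    exact stinj k l (Finset.mem_range.mp hk) (Finset.mem_range.mp hl)
  have hcardY : Fintype.card (∀ i, Fin (d' i)) = ∏ i, d' i := by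
    rw [Fintype.card_pi]; simp
  have hcardAc : (m - K) ≤ (Aᶜ).card := by
    rw [Finset.card_compl, hcardA, hcardY]
    omega
  obtain ⟨g⟩ : Nonempty (Fin (m - K) ↪ {y // y ∈ Aᶜ}) := by
    apply Function.Embedding.nonempty_of_card_le
    rw [Fintype.card_fin, Fintype.card_coe]
    exact hcardAc
  refine ⟨fun k => if h : (k : ℕ) < K then stair k else (g ⟨(k : ℕ) - K, by omega⟩).1, ?_, ?_⟩
  · intro k l hkl
    dsimp only at hkl
    by_cases hk : (k : ℕ) < K <;> by_cases hl : (l : ℕ) < K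
    · rw [dif_pos hk, dif_pos hl] at hkl
      exact Fin.ext (stinj _ _ hk hl hkl)
    · rw [dif_pos hk, dif_neg hl] at hkl
      exfalso
      have h1 : stair (k : ℕ) ∈ A := Finset.mem_image_of_mem _ (Finset.mem_range.mpr hk)
      have h2 := (g ⟨(l : ℕ) - K, by omega⟩).2
      rw [Finset.mem_compl] at h2
      rw [hkl] at h1
      exact absurd h1 h2
    · rw [dif_neg hk, dif_pos hl] at hkl
      exfalso
      have h1 : stair (l : ℕ) ∈ A := Finset.mem_image_of_mem _ (Finset.mem_range.mpr hl)
      have h2 := (g ⟨(k : ℕ) - K, by omega⟩).2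
      rw [Finset.mem_compl] at h2
      rw [← hkl] at h1
      exact absurd h1 h2
    · rw [dif_neg hk, dif_neg hl] at hkl
      have := g.injective (Subtype.ext hkl)
      simp only [Fin.mk.injEq] at this
      exact Fin.ext (by omega)
  · intro i a ha
    by_contra hcon
    have halt : (a : ℕ) < d' i - 1 := by have := a.2; omega
    have haK : (a : ℕ) < K := lt_of_lt_of_le halt (hKge i)
    have ham : (a : ℕ) < m := lt_of_lt_of_le haK hKm
    apply ha ⟨(a : ℕ), ham⟩
    dsimp only
    rw [dif_pos (by simpa using haK)]
    refine Fin.ext ?_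
    simp only [stair]
    omega

theorem sum_indicator_pair {α : Type*} [Fintype α] {m : ℕ} (u v : α → Fin m → Prop)
    [∀ x k, Decidable (u x k)] [∀ x k, Decidable (v x k)] (c c' : Fin m → ℝ) :
    ∑ x : α, (∑ k, if u x k then c k else 0) * (∑ l, if v x l then c' l else 0)
      = ∑ k, ∑ l, c k * c' l * (∑ x : α, if u x k ∧ v x l then (1:ℝ) else 0) := by
  have step : ∀ x, (∑ k, if u x k then c k else 0) * (∑ l, if v x l then c' l else 0)
      = ∑ k, ∑ l, c k * c' l * (if u x k ∧ v x l then (1:ℝ) else 0) := by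
    intro x
    rw [Finset.sum_mul_sum]
    refine Finset.sum_congr rfl fun k _ => Finset.sum_congr rfl fun l _ => ?_
    by_cases h1 : u x k <;> by_cases h2 : v x l <;> simp [h1, h2]
  simp_rw [step, Finset.mul_sum]
  rw [Finset.sum_comm]
  exact Finset.sum_congr rfl fun k _ => Finset.sum_comm

theorem stmt0_fwd (N : ℕ) (hN : 1 ≤ N) (d : Fin (N + 1) → ℕ)
    (hpos : ∀ i, 0 < d i) (hmono : Monotone d)
    (H : (∃ ψ : (∀ i, Fin (d i)) → ℂ,
      (∑ x : ∀ i, Fin (d i), ‖ψ x‖ ^ 2) = 1 ∧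
      ∀ j : Fin (N + 1),
        ∃ h : Matrix.IsHermitian
          (Matrix.of fun a b : Fin (d j) =>
            ((d j : ℂ))⁻¹ *
              ∑ x : ∀ i, Fin (d i),
                ψ (Function.update x j a) * star (ψ (Function.update x j b))),
          Function.Injective h.eigenvalues)) :
    d (Fin.last N) ≤ (∏ i : Fin N, d (Fin.castSucc i)) + 1 := by
  obtain ⟨ψ, -, hall⟩ := H
  obtain ⟨h, hinj⟩ := hall (Fin.last N)
  set D := d (Fin.last N) with hD
  set ρ : Matrix (Fin D) (Fin D) ℂ := Matrix.of fun a b : Fin D =>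
    ((D : ℂ))⁻¹ * ∑ x : ∀ i, Fin (d i),
      ψ (Function.update x (Fin.last N) a) * star (ψ (Function.update x (Fin.last N) b)) with hρ
  set M : Matrix (Fin D) (∀ i : Fin N, Fin (d i.castSucc)) ℂ :=
    Matrix.of fun a y => ψ (Fin.snoc y a) with hM
  -- update at last = snoc of init
  have hupd : ∀ (x : ∀ i, Fin (d i)) (a : Fin D),
      Function.update x (Fin.last N) a = Fin.snoc (Fin.init x) a := by
    intro x a
    funext i
    refine Fin.lastCases ?_ (fun i' => ?_) i
    · simp [Fin.snoc_last]
    · rw [Function.update_of_ne (Fin.castSucc_lt_last i').ne, Fin.snoc_castSucc]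
      rfl
  -- the equivalence
  let e : (∀ i, Fin (d i)) ≃ ((∀ i : Fin N, Fin (d i.castSucc)) × Fin D) :=
    { toFun := fun x => (Fin.init x, x (Fin.last N))
      invFun := fun p => Fin.snoc p.1 p.2
      left_inv := fun x => Fin.snoc_init_self x
      right_inv := fun p => by simp [Fin.init_snoc, Fin.snoc_last] }
  have hfact : ρ = M * Mᴴ := by
    ext a b
    have hsum : ∀ g : (∀ i : Fin N, Fin (d i.castSucc)) → ℂ,
        (∑ x : ∀ i, Fin (d i), g (Fin.init x)) = (D : ℂ) * ∑ y, g y := by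
      intro g
      rw [Fintype.sum_equiv e (fun x => g (Fin.init x)) (fun p => g p.1) (fun x => rfl)]
      rw [Fintype.sum_prod_type]
      simp only [Finset.sum_const, Finset.card_univ, Fintype.card_fin, nsmul_eq_mul]
      rw [← Finset.mul_sum]
    have : (∑ x : ∀ i, Fin (d i),
        ψ (Function.update x (Fin.last N) a) * star (ψ (Function.update x (Fin.last N) b)))
        = (D : ℂ) * ∑ y, ψ (Fin.snoc y a) * star (ψ (Fin.snoc y b)) := by
      rw [← hsum (fun y => ψ (Fin.snoc y a) * star (ψ (Fin.snoc y b)))]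
      refine Finset.sum_congr rfl fun x _ => ?_
      rw [hupd x a, hupd x b]
    have hD0 : (D : ℂ) ≠ 0 := Nat.cast_ne_zero.mpr (hpos (Fin.last N)).ne'
    simp only [hρ, Matrix.of_apply, this, Matrix.mul_apply, hM]
    rw [← mul_assoc, inv_mul_cancel₀ hD0, one_mul]
    simp [Matrix.conjTranspose_apply]
  -- rank bound
  have hrank : ρ.rank ≤ ∏ i : Fin N, d (Fin.castSucc i) := by
    rw [hfact]
    refine le_trans (Matrix.rank_mul_le_left M Mᴴ) (le_trans (Matrix.rank_le_card_width M) ?_)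
    rw [Fintype.card_pi]
    simp
  have hcard := h.rank_eq_card_non_zero_eigs
  -- zero eigenvalues at most one
  have hzero : Fintype.card {i : Fin D // h.eigenvalues i = 0} ≤ 1 := by
    rw [Fintype.card_le_one_iff]
    rintro ⟨i, hi⟩ ⟨j, hj⟩
    have : i = j := hinj (hi.trans hj.symm)
    simp [this]
  have hcompl : Fintype.card {i : Fin D // h.eigenvalues i ≠ 0}
      = D - Fintype.card {i : Fin D // h.eigenvalues i = 0} := by
    have := Fintype.card_subtype_compl (fun i : Fin D => h.eigenvalues i = 0)
    simp only [this, Fintype.card_fin]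
  have hrank' : ρ.rank = Fintype.card {i : Fin D // h.eigenvalues i ≠ 0} := hcard
  have hDle : D - 1 ≤ ρ.rank := by
    rw [hrank', hcompl]
    omega
  omega

theorem stmt0_rev (N : ℕ) (hN : 1 ≤ N) (d : Fin (N + 1) → ℕ)
    (hpos : ∀ i, 0 < d i) (hmono : Monotone d)
    (hle : d (Fin.last N) ≤ (∏ i : Fin N, d (Fin.castSucc i)) + 1) :
    (∃ ψ : (∀ i, Fin (d i)) → ℂ,
      (∑ x : ∀ i, Fin (d i), ‖ψ x‖ ^ 2) = 1 ∧
      ∀ j : Fin (N + 1),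
        ∃ h : Matrix.IsHermitian
          (Matrix.of fun a b : Fin (d j) =>
            ((d j : ℂ))⁻¹ *
              ∑ x : ∀ i, Fin (d i),
                ψ (Function.update x j a) * star (ψ (Function.update x j b))),
          Function.Injective h.eigenvalues) := by
  classical
  set P : ℕ := ∏ i : Fin N, d (Fin.castSucc i) with hPdef
  have hP : 0 < P := Finset.prod_pos (fun i _ => hpos _)
  set D : ℕ := d (Fin.last N) with hDdef
  have hD : 0 < D := hpos _
  set m : ℕ := min D P with hmdef
  have hm1 : 1 ≤ m := by omega
  have hmD : m ≤ D := min_le_left _ _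
  have hmP : m ≤ P := min_le_right _ _
  have hDm : D ≤ m + 1 := by omega
  obtain ⟨F, Finj, Fcover⟩ := exists_inj_cover N hN (fun i => d (Fin.castSucc i))
    (fun i => hpos _) m hmP
    (fun i => by
      have h1 : d (Fin.castSucc i) ≤ D := hmono (Fin.le_last _)
      show d (Fin.castSucc i) - 1 ≤ m
      omega)
  -- support points
  obtain ⟨e, he_cast, he_last⟩ :
      ∃ e : Fin m → (∀ i, Fin (d i)),
        (∀ k i, e k (Fin.castSucc i) = F k i) ∧ (∀ k, e k (Fin.last N) = Fin.castLE hmD k) :=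
    ⟨fun k => Fin.snoc (F k) (Fin.castLE hmD k), fun k i => Fin.snoc_castSucc _ _ _,
      fun k => Fin.snoc_last _ _⟩
  have einj : Function.Injective e := by
    intro k l hkl
    have := congrFun hkl (Fin.last N)
    rw [he_last, he_last] at this
    exact Fin.castLE_injective hmD this
  -- separation
  have sep : ∀ (j : Fin (N + 1)) (a b : Fin (d j)) (k l : Fin m) (x : ∀ i, Fin (d i)),
      Function.update x j a = e k → Function.update x j b = e l → k = l ∧ a = b := by
    intro j a b k l x h1 h2
    have hkl : k = l := by
      by_cases hj : j = Fin.last N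
      · subst hj
        apply Finj
        funext i
        rw [← he_cast k i, ← he_cast l i, ← h1, ← h2,
          Function.update_of_ne (Fin.castSucc_lt_last i).ne,
          Function.update_of_ne (Fin.castSucc_lt_last i).ne]
      · apply Fin.castLE_injective hmD
        rw [← he_last k, ← he_last l, ← h1, ← h2,
          Function.update_of_ne (Ne.symm hj), Function.update_of_ne (Ne.symm hj)]
    subst hkl
    refine ⟨rfl, ?_⟩
    have ha : a = e k j := by rw [← h1, Function.update_self]
    have hb : b = e k j := by rw [← h2, Function.update_self]
    rw [ha, hb]
  -- coverage
  have cover : ∀ (j : Fin (N + 1)) (a b : Fin (d j)),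
      (∀ k : Fin m, e k j ≠ a) → (∀ k : Fin m, e k j ≠ b) → a = b := by
    intro j
    induction j using Fin.lastCases with
    | last =>
      intro a b ha hb
      have key : ∀ c : Fin (d (Fin.last N)), (∀ k : Fin m, e k (Fin.last N) ≠ c) → (c : ℕ) = m := by
        intro c hc
        have h1 : ¬ ((c : ℕ) < m) := by
          intro hlt
          exact hc ⟨(c : ℕ), hlt⟩ (by rw [he_last]; exact Fin.ext rfl)
        have h2 : (c : ℕ) < D := c.2
        omega
      exact Fin.ext ((key a ha).trans (key b hb).symm)
    | cast i =>
      intro a b ha hb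
      have ka := Fcover i a (fun k => by have := ha k; rw [he_cast] at this; exact this)
      have kb := Fcover i b (fun k => by have := hb k; rw [he_cast] at this; exact this)
      exact Fin.ext (ka.trans kb.symm)
  -- the weights
  set T : ℝ := 2 ^ m - 1 with hT
  have hTpos : 0 < T := by
    have : (2:ℝ) ^ 1 ≤ 2 ^ m := pow_le_pow_right₀ (by norm_num) hm1
    simp only [hT]
    nlinarith
  set w : Fin m → ℝ := fun k => 2 ^ (k : ℕ) / T with hw
  have hwpos : ∀ k, 0 < w k := fun k => div_pos (by positivity) hTpos
  set c : Fin m → ℝ := fun k => Real.sqrt (w k) with hc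
  have hc2 : ∀ k, c k ^ 2 = w k := fun k => Real.sq_sqrt (hwpos k).le
  have hwsum : ∑ k : Fin m, w k = 1 := by
    rw [hw]
    rw [← Finset.sum_div]
    rw [div_eq_one_iff_eq hTpos.ne']
    rw [Fin.sum_univ_eq_sum_range (fun i => (2:ℝ) ^ i) m]
    rw [geom_sum_eq (by norm_num) m]
    rw [hT]
    norm_num
  -- the state
  set φ : (∀ i, Fin (d i)) → ℝ := fun x => ∑ k, if x = e k then c k else 0 with hφ
  -- fibers and their sums
  set q : ∀ j : Fin (N + 1), Fin (d j) → ℝ :=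
    fun j a => ∑ k, if e k j = a then w k else 0 with hq
  have qinj : ∀ j : Fin (N + 1), Function.Injective (q j) := by
    intro j a b hab
    by_contra hne
    set Fa : Finset (Fin m) := Finset.univ.filter (fun k => e k j = a) with hFa
    set Fb : Finset (Fin m) := Finset.univ.filter (fun k => e k j = b) with hFb
    set Sa : Finset ℕ := Fa.image Fin.val with hSa
    set Sb : Finset ℕ := Fb.image Fin.val with hSb
    have hqa : ∀ (cc : Fin (d j)) (Fc : Finset (Fin m)) (Sc : Finset ℕ),
        Fc = Finset.univ.filter (fun k => e k j = cc) → Sc = Fc.image Fin.val →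
        q j cc = ((∑ i ∈ Sc, 2 ^ i : ℕ) : ℝ) / T := by
      intro cc Fc Sc hFc hSc
      simp only [hq]
      rw [show (∑ k, if e k j = cc then w k else 0) = ∑ k ∈ Fc, w k by
        rw [hFc, Finset.sum_filter]]
      rw [hw]
      rw [← Finset.sum_div]
      congr 1
      rw [hSc, Finset.sum_image (fun x _ y _ h => Fin.val_injective h)]
      push_cast
      rfl
    have ha' := hqa a Fa Sa hFa hSa
    have hb' := hqa b Fb Sb hFb hSb
    rw [ha', hb', div_eq_div_iff hTpos.ne' hTpos.ne'] at hab
    have hnat : (∑ i ∈ Sa, 2 ^ i) = ∑ i ∈ Sb, 2 ^ i := by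
      have := mul_right_cancel₀ hTpos.ne' hab
      exact_mod_cast this
    have hdisj : Disjoint Sa Sb := by
      rw [Finset.disjoint_left]
      intro i hia hib
      rw [hSa, Finset.mem_image] at hia
      rw [hSb, Finset.mem_image] at hib
      obtain ⟨k, hk, rfl⟩ := hia
      obtain ⟨k', hk', hkk'⟩ := hib
      have : k' = k := Fin.val_injective hkk'
      subst this
      rw [hFa, Finset.mem_filter] at hk
      rw [hFb, Finset.mem_filter] at hk'
      exact hne (hk.2.symm.trans hk'.2 ▸ rfl)
    rcases Finset.eq_empty_or_nonempty Sa with hSae | hSane <;>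
      rcases Finset.eq_empty_or_nonempty Sb with hSbe | hSbne
    · -- both empty: coverage forces a = b
      apply hne
      have hFae : Fa = ∅ := by
        by_contra hcon
        obtain ⟨k, hk⟩ := Finset.nonempty_iff_ne_empty.mpr hcon
        have : (k : ℕ) ∈ Sa := by rw [hSa]; exact Finset.mem_image_of_mem _ hk
        rw [hSae] at this
        simp at this
      have hFbe : Fb = ∅ := by
        by_contra hcon
        obtain ⟨k, hk⟩ := Finset.nonempty_iff_ne_empty.mpr hcon
        have : (k : ℕ) ∈ Sb := by rw [hSb]; exact Finset.mem_image_of_mem _ hk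
        rw [hSbe] at this
        simp at this
      refine cover j a b (fun k hk => ?_) (fun k hk => ?_)
      · have : k ∈ Fa := by rw [hFa]; exact Finset.mem_filter.mpr ⟨Finset.mem_univ _, hk⟩
        rw [hFae] at this; simp at this
      · have : k ∈ Fb := by rw [hFb]; exact Finset.mem_filter.mpr ⟨Finset.mem_univ _, hk⟩
        rw [hFbe] at this; simp at this
    · -- Sa empty, Sb nonempty
      rw [hSae, Finset.sum_empty] at hnat
      obtain ⟨i, hi⟩ := hSbne
      have : 0 < ∑ i ∈ Sb, 2 ^ i :=
        lt_of_lt_of_le (pow_pos (by norm_num) i)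
          (Finset.single_le_sum (fun _ _ => Nat.zero_le _) hi)
      omega
    · rw [hSbe, Finset.sum_empty] at hnat
      obtain ⟨i, hi⟩ := hSane
      have : 0 < ∑ i ∈ Sa, 2 ^ i :=
        lt_of_lt_of_le (pow_pos (by norm_num) i)
          (Finset.single_le_sum (fun _ _ => Nat.zero_le _) hi)
      omega
    · exact disj_two_pow_sum_ne Sa Sb hdisj hSane hSbne hnat
  refine ⟨fun x => ((φ x : ℝ) : ℂ), ?_, ?_⟩
  · -- normalization
    show (∑ x : ∀ i, Fin (d i), ‖((φ x : ℝ) : ℂ)‖ ^ 2) = 1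
    have hnorm : ∀ x, ‖((φ x : ℝ) : ℂ)‖ ^ 2 = φ x * φ x := by
      intro x
      rw [Complex.norm_real, Real.norm_eq_abs, sq_abs, pow_two]
    simp_rw [hnorm, hφ]
    rw [sum_indicator_pair (fun x k => x = e k) (fun x k => x = e k) c c]
    have cnt1 : ∀ k l : Fin m,
        (∑ x : ∀ i, Fin (d i), if x = e k ∧ x = e l then (1:ℝ) else 0)
          = if k = l then 1 else 0 := by
      intro k l
      by_cases hkl : k = l
      · subst hkl
        simp only [and_self, if_pos rfl]
        rw [Finset.sum_boole]
        rw [Finset.filter_eq']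
        simp
      · rw [if_neg hkl]
        apply Finset.sum_eq_zero
        intro x _
        rw [if_neg]
        rintro ⟨r1, r2⟩
        exact hkl (einj (r1.symm.trans r2))
    simp_rw [cnt1, mul_ite, mul_one, mul_zero]
    have : ∀ k : Fin m, (∑ l, if k = l then c k * c l else 0) = w k := by
      intro k
      rw [Finset.sum_ite_eq]
      simp only [Finset.mem_univ, if_true]
      rw [← pow_two, hc2]
    simp_rw [this]
    exact hwsum
  · -- the reduced density matrices
    intro j
    have hdj : (0:ℝ) < d j := by exact_mod_cast hpos j
    have hmat : (Matrix.of fun a b : Fin (d j) =>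
        ((d j : ℂ))⁻¹ * ∑ x : ∀ i, Fin (d i),
          (fun x => ((φ x : ℝ) : ℂ)) (Function.update x j a)
            * star ((fun x => ((φ x : ℝ) : ℂ)) (Function.update x j b)))
        = Matrix.diagonal (fun a => ((q j a : ℝ) : ℂ)) := by
      ext a b
      rw [Matrix.of_apply, Matrix.diagonal_apply]
      have hstar : ∀ x : ∀ i, Fin (d i),
          (fun x => ((φ x : ℝ) : ℂ)) (Function.update x j a)
            * star ((fun x => ((φ x : ℝ) : ℂ)) (Function.update x j b))
          = ((φ (Function.update x j a) * φ (Function.update x j b) : ℝ) : ℂ) := by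
        intro x
        simp only [Complex.ofReal_mul]
        congr 1
        exact Complex.conj_ofReal _
      simp_rw [hstar]
      rw [← Complex.ofReal_sum]
      -- the real sum
      have cnt2 : ∀ k l : Fin m,
          (∑ x : ∀ i, Fin (d i),
            if Function.update x j a = e k ∧ Function.update x j b = e l then (1:ℝ) else 0)
            = if k = l ∧ a = b ∧ e k j = a then (d j : ℝ) else 0 := by
        intro k l
        by_cases hcond : k = l ∧ a = b ∧ e k j = a
        · obtain ⟨rfl, rfl, hek⟩ := hcond
          rw [if_pos ⟨rfl, rfl, hek⟩]
          simp only [and_self]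
          rw [Finset.sum_boole]
          norm_cast
          rw [← Fintype.card_subtype]
          rw [Fintype.card_congr
            (⟨fun x => x.1 j, fun t => ⟨Function.update (e k) j t, by
                rw [Function.update_idem]
                conv_lhs => rw [← hek]
                exact Function.update_eq_self _ _⟩,
              fun x => Subtype.ext (funext fun i => by
                show Function.update (e k) j (x.1 j) i = x.1 i
                rcases eq_or_ne i j with rfl | hij
                · simp
                · have h5 := congrFun x.2 i
                  rw [Function.update_of_ne hij] at h5
                  exact (Function.update_of_ne hij _ _).trans h5.symm),
              fun t => Function.update_self _ _ _⟩ :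
              {x : ∀ i, Fin (d i) // Function.update x j a = e k} ≃ Fin (d j))]
          rw [Fintype.card_fin]
        · rw [if_neg hcond]
          apply Finset.sum_eq_zero
          intro x _
          rw [if_neg]
          rintro ⟨r1, r2⟩
          obtain ⟨hkl, hab⟩ := sep j a b k l x r1 r2
          have hek : e k j = a := by
            have := congrFun r1 j
            rw [Function.update_self] at this
            exact this.symm
          exact hcond ⟨hkl, hab, hek⟩
      have hreal : (∑ x : ∀ i, Fin (d i),
          φ (Function.update x j a) * φ (Function.update x j b))
          = if a = b then (d j : ℝ) * q j a else 0 := by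
        simp_rw [hφ]
        rw [sum_indicator_pair (fun x k => Function.update x j a = e k)
          (fun x l => Function.update x j b = e l) c c]
        simp_rw [cnt2]
        by_cases hab : a = b
        · subst hab
          rw [if_pos rfl]
          have hkk : ∀ k : Fin m,
              (∑ l, c k * c l * (if k = l ∧ a = a ∧ e k j = a then (d j:ℝ) else 0))
              = if e k j = a then w k * (d j : ℝ) else 0 := by
            intro k
            by_cases hq' : e k j = a
            · rw [if_pos hq']
              rw [Finset.sum_eq_single k]
              · rw [if_pos ⟨rfl, rfl, hq'⟩, ← pow_two, hc2]
              · intro l _ hlk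
                rw [if_neg (by rintro ⟨rfl, -, -⟩; exact hlk rfl), mul_zero]
              · intro hk; exact absurd (Finset.mem_univ k) hk
            · rw [if_neg hq']
              apply Finset.sum_eq_zero
              intro l _
              rw [if_neg (by rintro ⟨rfl, -, h3⟩; exact hq' h3), mul_zero]
          rw [show (∑ k : Fin m, ∑ l : Fin m,
              c k * c l * if k = l ∧ a = a ∧ e k j = a then (d j:ℝ) else 0)
              = ∑ k : Fin m, (if e k j = a then w k * (d j:ℝ) else 0) from
            Finset.sum_congr rfl fun k _ => hkk k]
          simp only [hq]
          rw [Finset.mul_sum]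
          refine Finset.sum_congr rfl fun k _ => ?_
          by_cases hq' : e k j = a
          · rw [if_pos hq', if_pos hq']; ring
          · rw [if_neg hq', if_neg hq', mul_zero]
        · rw [if_neg hab]
          apply Finset.sum_eq_zero
          intro k _
          apply Finset.sum_eq_zero
          intro l _
          rw [if_neg (by rintro ⟨-, h2, -⟩; exact hab h2), mul_zero]
      rw [hreal]
      by_cases hab : a = b
      · rw [if_pos hab, if_pos hab]
        push_cast
        rw [← mul_assoc, inv_mul_cancel₀ (by exact_mod_cast hdj.ne'), one_mul]
      · rw [if_neg hab, if_neg hab, Complex.ofReal_zero, mul_zero]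
    rw [hmat]
    have hherm : Matrix.IsHermitian (Matrix.diagonal (fun a => ((q j a : ℝ) : ℂ))) := by
      have hstarfun : (star fun a : Fin (d j) => ((q j a : ℝ) : ℂ)) = fun a => ((q j a : ℝ) : ℂ) :=
        funext fun a => Complex.conj_ofReal _
      rw [Matrix.IsHermitian, Matrix.diagonal_conjTranspose, hstarfun]
    exact ⟨hherm, diag_eig_inj (q j) (qinj j) hherm⟩

end Aux

/-- there exists a pure state of `N+1` distinguishable particles with local
dimensions `d 0 ≤ … ≤ d N` whose one-body reduced density matrices all have non-degenerate
(all distinct) eigenvalues, iff `d (last) ≤ (∏ first N dims) + 1`. The `j`-th reduced density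
matrix is `ρ_j a b = (d j)⁻¹ ∑_x ψ(x[j ↦ a]) conj ψ(x[j ↦ b])` (partial trace). -/
theorem stmt_0 (N : ℕ) (hN : 1 ≤ N) (d : Fin (N + 1) → ℕ)
    (hpos : ∀ i, 0 < d i) (hmono : Monotone d) :
    (∃ ψ : (∀ i, Fin (d i)) → ℂ,
      (∑ x : ∀ i, Fin (d i), ‖ψ x‖ ^ 2) = 1 ∧
      ∀ j : Fin (N + 1),
        ∃ h : Matrix.IsHermitian
          (Matrix.of fun a b : Fin (d j) =>
            ((d j : ℂ))⁻¹ *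
              ∑ x : ∀ i, Fin (d i),
                ψ (Function.update x j a) * star (ψ (Function.update x j b))),
          Function.Injective h.eigenvalues)
    ↔ d (Fin.last N) ≤ (∏ i : Fin N, d (Fin.castSucc i)) + 1 := by
  exact ⟨stmt0_fwd N hN d hpos hmono, stmt0_rev N hN d hpos hmono⟩
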